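/- Let $C_{MZ} > 0$, let $c_0 = \frac{7}{12} - \frac{17}{6\pi^2}$, $c_1 = \frac{1}{3} - \frac{5}{6\pi^2}$, $c_2 = \frac{1}{12} + \frac{1}{6\pi^2}$, and let $V_{g,n}$ (for integers $g \ge 1$ and $n \in \{0,1,2\}$) be positive reals satisfying: (H1) for each $n \in \{0,1,2\}$, as $g \to \infty$, $V_{g,n} = C_{MZ}\,F(g,n)\left(1 + \frac{c_n}{g} + O\left(\frac{1}{g^2}\right)\right)$; (H2) there exist constants $0 < a \le A$ with $a\,F(g,n) \le V_{g,n} \le A\,F(g,n)$ for all $g \ge 2$ and $n \in \{0,1\}$. Define, for $g \ge 4$, $E_g := \frac{1}{2}\frac{V_{g-1,2}}{V_{g,0}} + \frac{1}{48}\frac{V_{g-1,1}}{V_{g,0}} + \sum_{j=2}^{\lfloor (g-1)/2 \rfloor} \frac{V_{j,1}V_{g-j,1}}{V_{g,0}} + \frac{1}{2}\frac{(V_{g/2,1})^2}{V_{g,0}}$, with the convention $V_{g/2,1} := 0$ if $g$ is odd. Then, as $g \to \infty$, $\frac{1}{4\pi}E_g = \frac{\pi}{12}\cdot\frac{1}{g}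 + \left(\frac{1}{4\pi} + \frac{\pi}{12}\right)\frac{1}{g^2} + O\left(\frac{1}{g^3}\right)$. -/

import Mathlib

/-- The Mirzakhani-Zograf main term
`F(g,n) = (3g-3+n)! (2g-3+n)! 2^(g-3+n) / (π^(2g) √g)`. -/
noncomputable def F (g n : ℕ) : ℝ :=
  (Nat.factorial (3 * g + n - 3) : ℝ) * (Nat.factorial (2 * g + n - 3) : ℝ) *
    (2 : ℝ) ^ ((g : ℤ) + (n : ℤ) - 3) / (Real.pi ^ (2 * g) * Real.sqrt (g : ℝ))

theorem F_pos (g n : ℕ) (hg : 1 ≤ g) : 0 < F g n := by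
  unfold F
  have h1 : (0:ℝ) < Real.pi := Real.pi_pos
  have h2 : (0:ℝ) < Real.sqrt g := Real.sqrt_pos.2 (by exact_mod_cast hg)
  positivity

theorem F2_eq (g : ℕ) (hg : 4 ≤ g) :
    F (g-1) 2 * (3*(g:ℝ)-3) * Real.sqrt ((g:ℝ)-1)
      = F g 0 * (2 * Real.pi^2) * Real.sqrt (g:ℝ) := by
  have hπ : (0:ℝ) < Real.pi := Real.pi_pos
  have e1 : 3*(g-1)+2-3 = 3*g-4 := by omega
  have e2 : 2*(g-1)+2-3 = 2*g-3 := by omega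
  have e3 : 2*(g-1) = 2*g-2 := by omega
  have e4 : ((g-1 : ℕ) : ℤ) + ((2:ℕ):ℤ) - 3 = ((g:ℤ) - 3) + 1 := by
    push_cast [Nat.cast_sub (by omega : 1 ≤ g)]; ring
  have e8 : (g:ℤ) + ((0:ℕ):ℤ) - 3 = (g:ℤ) - 3 := by push_cast; ring
  have e5 : ((g-1 : ℕ) : ℝ) = (g:ℝ) - 1 := by
    push_cast [Nat.cast_sub (by omega : 1 ≤ g)]; ring
  have e6 : 3*g+0-3 = 3*g-3 := by omega
  have e7 : 2*g+0-3 = 2*g-3 := by omega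
  unfold F
  rw [e1, e2, e3, e4, e5, e6, e7, e8]
  have hfac : ((3*g-3).factorial : ℝ) = (3*(g:ℝ)-3) * ((3*g-4).factorial : ℝ) := by
    rw [show (3*g-3) = (3*g-4)+1 by omega, Nat.factorial_succ]
    push_cast [Nat.cast_sub (by omega : 4 ≤ 3*g)]
    ring
  rw [zpow_add_one₀ (two_ne_zero), hfac]
  rw [show 2*g = (2*g-2)+2 by omega, pow_add]
  have hsx : (0:ℝ) < Real.sqrt ((g:ℝ)) := Real.sqrt_pos.2 (by positivity)
  have hsy : (0:ℝ) < Real.sqrt ((g:ℝ)-1) := Real.sqrt_pos.2 (by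
    have : (4:ℝ) ≤ (g:ℝ) := by exact_mod_cast hg
    linarith)
  have hp2 : (0:ℝ) < Real.pi ^ (2*g-2) := by positivity
  rw [show 2*g-2+2-2 = 2*g-2 by omega]
  field_simp

theorem Fj1_eq (j : ℕ) (hj : 1 ≤ j) :
    F j 1 = (Nat.factorial (3*j-2) : ℝ) * (Nat.factorial (2*j-2) : ℝ) *
      (2:ℝ) ^ ((j:ℤ)-2) / (Real.pi ^ (2*j) * Real.sqrt (j:ℝ)) := by
  unfold F
  rw [show 3*j+1-3 = 3*j-2 by omega, show 2*j+1-3 = 2*j-2 by omega,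
    show (j:ℤ) + ((1:ℕ):ℤ) - 3 = (j:ℤ)-2 by push_cast; ring]

theorem Fg0_eq (g : ℕ) :
    F g 0 = (Nat.factorial (3*g-3) : ℝ) * (Nat.factorial (2*g-3) : ℝ) *
      (2:ℝ) ^ ((g:ℤ)-3) / (Real.pi ^ (2*g) * Real.sqrt (g:ℝ)) := by
  unfold F
  rw [show 3*g+0-3 = 3*g-3 by omega, show 2*g+0-3 = 2*g-3 by omega,
    show (g:ℤ) + ((0:ℕ):ℤ) - 3 = (g:ℤ)-3 by push_cast; ring]

open Nat in
theorem fmf_aux (k d : ℕ) : ∀ b : ℕ, k + d ≤ b → (k+d)! * b ! ≤ k ! * (d+b)! := by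
  induction d with
  | zero => intro b _; simp
  | succ d ih =>
    intro b hb
    have h1 : (k+(d+1))! * b ! ≤ (k+d)! * (b+1)! := by
      have e1 : (k+(d+1))! = (k+d+1) * (k+d)! := rfl
      have e2 : (b+1)! = (b+1) * b ! := rfl
      rw [e1, e2]
      calc (k+d+1) * (k+d)! * b ! ≤ (b+1) * (k+d)! * b ! := by
            apply Nat.mul_le_mul_right
            exact Nat.mul_le_mul_right _ (by omega)
        _ = (k+d)! * ((b+1) * b !) := by ring
    have h2 := ih (b+1) (by omega)
    have : d + (b+1) = d + 1 + b := by omega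
    rw [this] at h2
    omega

open Nat in
theorem fmf (k a b c : ℕ) (h1 : k ≤ a) (h2 : a ≤ b) (h3 : a + b = k + c) :
    a ! * b ! ≤ k ! * c ! := by
  have ha : a = k + (a - k) := by omega
  have hc : c = (a - k) + b := by omega
  rw [ha, hc]
  exact fmf_aux k (a-k) b (by omega)

open Nat in
theorem natkey (j k : ℕ) (h2 : 2 ≤ j) (hjk : j ≤ k) (h8 : 8 ≤ j + k) :
    ((3*j-2)! * (2*j-2)! * ((3*k-2)! * (2*k-2)!) * (j+k)^4) * 2
      ≤ (3*(j+k)-3)! * (2*(j+k)-3)! := by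
  set g := j + k with hg
  have h3 : (3*j-2)! * (3*k-2)! ≤ 24 * (3*g-8)! := by
    have := fmf 4 (3*j-2) (3*k-2) (3*g-8) (by omega) (by omega) (by omega)
    simpa [show (4:ℕ)! = 24 from rfl] using this
  have h2' : (2*j-2)! * (2*k-2)! ≤ 2 * (2*g-6)! := by
    have := fmf 2 (2*j-2) (2*k-2) (2*g-6) (by omega) (by omega) (by omega)
    simpa [show (2:ℕ)! = 2 from rfl] using this
  have fac5 : ∀ n : ℕ, (n+5)! = (n+5)*((n+4)*((n+3)*((n+2)*((n+1)*n !)))) := by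
    intro n
    show (n+4+1)! = _
    rw [Nat.factorial_succ, Nat.factorial_succ, Nat.factorial_succ, Nat.factorial_succ,
      Nat.factorial_succ]
  have fac3 : ∀ n : ℕ, (n+3)! = (n+3)*((n+2)*((n+1)*n !)) := by
    intro n
    show (n+2+1)! = _
    rw [Nat.factorial_succ, Nat.factorial_succ, Nat.factorial_succ]
  have hE3 := fac5 (3*g-8)
  rw [show (3*g-8)+5 = 3*g-3 by omega, show (3*g-8)+4 = 3*g-4 by omega,
    show (3*g-8)+3 = 3*g-5 by omega, show (3*g-8)+2 = 3*g-6 by omega,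
    show (3*g-8)+1 = 3*g-7 by omega] at hE3
  have hE2 := fac3 (2*g-6)
  rw [show (2*g-6)+3 = 2*g-3 by omega, show (2*g-6)+2 = 2*g-4 by omega,
    show (2*g-6)+1 = 2*g-5 by omega] at hE2
  have hg4 : 96 ≤ 32*g^4 := by
    have : g ≤ g^4 := Nat.le_self_pow (by norm_num) g
    omega
  have hP : 96*g^4 ≤ (3*g-3)*((3*g-4)*((3*g-5)*((3*g-6)*((3*g-7)*((2*g-3)*((2*g-4)*(2*g-5))))))) := by
    calc 96*g^4 ≤ (32*g^4)*g^4 := Nat.mul_le_mul_right _ hg4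
      _ = (2*g)*((2*g)*((2*g)*((2*g)*((2*g)*((g)*((g)*(g))))))) := by ring
      _ ≤ _ := by gcongr <;> omega
  calc (3*j-2)! * (2*j-2)! * ((3*k-2)! * (2*k-2)!) * g^4 * 2
      = ((3*j-2)! * (3*k-2)!) * ((2*j-2)! * (2*k-2)!) * (g^4*2) := by ring
    _ ≤ (24*(3*g-8)!) * (2*(2*g-6)!) * (g^4*2) := by
        gcongr
    _ = (96*g^4) * ((3*g-8)! * (2*g-6)!) := by ring
    _ ≤ ((3*g-3)*((3*g-4)*((3*g-5)*((3*g-6)*((3*g-7)*((2*g-3)*((2*g-4)*(2*g-5)))))))) * ((3*g-8)! * (2*g-6)!) := Nat.mul_le_mul_right _ hP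
    _ = (3*g-3)! * (2*g-3)! := by rw [hE3, hE2]; ring

theorem Fprod_le (j k : ℕ) (h2 : 2 ≤ j) (hjk : j ≤ k) (h8 : 8 ≤ j + k) :
    F j 1 * F k 1 ≤ F (j+k) 0 / ((j+k : ℕ):ℝ)^4 := by
  have hπ : (0:ℝ) < Real.pi := Real.pi_pos
  have hj1 : (1:ℕ) ≤ j := by omega
  have hk1 : (1:ℕ) ≤ k := by omega
  rw [Fj1_eq j hj1, Fj1_eq k hk1, Fg0_eq (j+k)]
  have hjR : (0:ℝ) < (j:ℝ) := by exact_mod_cast hj1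
  have hkR : (0:ℝ) < (k:ℝ) := by exact_mod_cast hk1
  have hgR : (0:ℝ) < ((j+k:ℕ):ℝ) := by positivity
  have hsj : (0:ℝ) < Real.sqrt (j:ℝ) := Real.sqrt_pos.2 hjR
  have hsk : (0:ℝ) < Real.sqrt (k:ℝ) := Real.sqrt_pos.2 hkR
  have hsg : (0:ℝ) < Real.sqrt ((j+k:ℕ):ℝ) := Real.sqrt_pos.2 hgR
  rw [div_mul_div_comm, div_div]
  rw [div_le_div_iff₀ (by positivity) (by positivity)]
  have hππ : Real.pi ^ (2*(j+k)) = Real.pi ^ (2*j) * Real.pi ^ (2*k) := by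
    rw [← pow_add]; congr 1; ring
  have h2pow : (2:ℝ) ^ (((j+k:ℕ):ℤ)-3) = 2 * ((2:ℝ)^((j:ℤ)-2) * (2:ℝ)^((k:ℤ)-2)) := by
    rw [show ((j+k:ℕ):ℤ)-3 = 1 + (((j:ℤ)-2) + ((k:ℤ)-2)) by push_cast; ring,
      zpow_add₀ (two_ne_zero), zpow_add₀ (two_ne_zero), zpow_one]
  rw [hππ, h2pow]
  have hsq : Real.sqrt ((j+k:ℕ):ℝ) ≤ Real.sqrt (j:ℝ) * Real.sqrt (k:ℝ) := by
    rw [← Real.sqrt_mul (le_of_lt hjR)]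
    apply Real.sqrt_le_sqrt
    have hnn : j + k ≤ j * k := by
      have := Nat.mul_le_mul_right k h2
      omega
    exact_mod_cast hnn
  set NL : ℝ := ((3*j-2).factorial : ℝ) * ((2*j-2).factorial : ℝ) *
      (((3*k-2).factorial : ℝ) * ((2*k-2).factorial : ℝ)) * ((j+k:ℕ):ℝ)^4 with hNL
  set NR : ℝ := ((3*(j+k)-3).factorial : ℝ) * ((2*(j+k)-3).factorial : ℝ) with hNR
  have hnat : NL * 2 ≤ NR := by
    rw [hNL, hNR]
    exact_mod_cast natkey j k h2 hjk h8
  have hmain : (NL*2) * Real.sqrt ((j+k:ℕ):ℝ)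
      ≤ NR * (Real.sqrt (j:ℝ) * Real.sqrt (k:ℝ)) := by
    apply mul_le_mul hnat hsq (le_of_lt hsg)
    have : (0:ℝ) ≤ NL * 2 := by rw [hNL]; positivity
    linarith
  set T : ℝ := (2:ℝ)^((j:ℤ)-2) * (2:ℝ)^((k:ℤ)-2) * (Real.pi^(2*j) * Real.pi^(2*k)) with hT
  have hT0 : (0:ℝ) ≤ T := by rw [hT]; positivity
  have key : ((NL*2) * Real.sqrt ((j+k:ℕ):ℝ)) * T
      ≤ (NR * (Real.sqrt (j:ℝ) * Real.sqrt (k:ℝ))) * T :=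
    mul_le_mul_of_nonneg_right hmain hT0
  have hApos : (0:ℝ) ≤ NL * Real.sqrt ((j+k:ℕ):ℝ) * T := by
    rw [hNL, hT]; positivity
  simp only [hNL, hNR, hT] at key hApos ⊢
  nlinarith [key, hApos]

theorem F1_eq (g : ℕ) (hg : 4 ≤ g) :
    F (g-1) 1 * ((3*(g:ℝ)-3) * ((3*(g:ℝ)-4) * (2*(g:ℝ)-3))) * Real.sqrt ((g:ℝ)-1)
      = F g 0 * Real.pi^2 * Real.sqrt (g:ℝ) := by
  have hπ : (0:ℝ) < Real.pi := Real.pi_pos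
  have e1 : 3*(g-1)+1-3 = 3*g-5 := by omega
  have e2 : 2*(g-1)+1-3 = 2*g-4 := by omega
  have e3 : 2*(g-1) = 2*g-2 := by omega
  have e4 : ((g-1 : ℕ) : ℤ) + ((1:ℕ):ℤ) - 3 = (g:ℤ) - 3 := by
    push_cast [Nat.cast_sub (by omega : 1 ≤ g)]; ring
  have e5 : ((g-1 : ℕ) : ℝ) = (g:ℝ) - 1 := by
    push_cast [Nat.cast_sub (by omega : 1 ≤ g)]; ring
  have e6 : 3*g+0-3 = 3*g-3 := by omega
  have e7 : 2*g+0-3 = 2*g-3 := by omega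
  have e8 : (g:ℤ) + ((0:ℕ):ℤ) - 3 = (g:ℤ) - 3 := by push_cast; ring
  unfold F
  rw [e1, e2, e3, e4, e5, e6, e7, e8]
  have hfacA : ((3*g-3).factorial : ℝ) = (3*(g:ℝ)-3) * ((3*(g:ℝ)-4) * ((3*g-5).factorial : ℝ)) := by
    rw [show (3*g-3) = (3*g-5)+1+1 by omega, Nat.factorial_succ, Nat.factorial_succ]
    push_cast [Nat.cast_sub (by omega : 5 ≤ 3*g)]
    ring
  have hfacB : ((2*g-3).factorial : ℝ) = (2*(g:ℝ)-3) * ((2*g-4).factorial : ℝ) := by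
    rw [show (2*g-3) = (2*g-4)+1 by omega, Nat.factorial_succ]
    push_cast [Nat.cast_sub (by omega : 4 ≤ 2*g)]
    ring
  rw [hfacA, hfacB]
  rw [show 2*g = (2*g-2)+2 by omega, pow_add]
  have hsx : (0:ℝ) < Real.sqrt ((g:ℝ)) := Real.sqrt_pos.2 (by positivity)
  have hsy : (0:ℝ) < Real.sqrt ((g:ℝ)-1) := Real.sqrt_pos.2 (by
    have : (4:ℝ) ≤ (g:ℝ) := by exact_mod_cast hg
    linarith)
  have hp2 : (0:ℝ) < Real.pi ^ (2*g-2) := by positivity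
  rw [show 2*g-2+2-2 = 2*g-2 by omega]
  field_simp


theorem sqrt_ratio_bounds (x : ℝ) (hx : 2 ≤ x) :
    1 + 1/(2*x) ≤ Real.sqrt x / Real.sqrt (x-1) ∧
    Real.sqrt x / Real.sqrt (x-1) ≤ 1 + 1/(2*x) + 1/x^2 := by
  have hx0 : (0:ℝ) < x := by linarith
  have hx1 : (0:ℝ) < x - 1 := by linarith
  have hdiv : Real.sqrt x / Real.sqrt (x-1) = Real.sqrt (x/(x-1)) :=
    (Real.sqrt_div hx0.le (x-1)).symm
  rw [hdiv]
  constructor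
  · rw [show (1:ℝ) + 1/(2*x) = Real.sqrt ((1+1/(2*x))^2) from
      (Real.sqrt_sq (by positivity)).symm]
    apply Real.sqrt_le_sqrt
    rw [le_div_iff₀ hx1]
    have h2 : (1 + 1/(2*x))^2 * (x-1) ≤ x := by
      have hxne : x ≠ 0 := ne_of_gt hx0
      field_simp
      nlinarith
    linarith
  · rw [show (1:ℝ) + 1/(2*x) + 1/x^2 = Real.sqrt ((1+1/(2*x)+1/x^2)^2) from
      (Real.sqrt_sq (by positivity)).symm]
    apply Real.sqrt_le_sqrt
    rw [div_le_iff₀ hx1]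
    have hxne : x ≠ 0 := ne_of_gt hx0
    have hx4 : (0:ℝ) < x^4 := by positivity
    have h5 : x*x^4 ≤ (x^2+x/2+1)^2*(x-1) := by nlinarith [hx0, hx1]
    calc x = x*x^4/x^4 := by field_simp
      _ ≤ (x^2+x/2+1)^2*(x-1)/x^4 := (div_le_div_iff_of_pos_right hx4).2 h5
      _ = (1 + 1/(2*x) + 1/x^2)^2 * (x-1) := by field_simp

set_option maxHeartbeats 2000000 in
theorem delta0_bound (x q : ℝ) (hx : 30 ≤ x) (hq9 : 9 < q) (hq10 : q < 10) :
    |(2*q/(3*(x-1)))*(1+1/(2*x))*(1+(1/12+1/(6*q))/(x-1))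
      - 2*(q/(3*x)+(1+q/3)/x^2)*(1+(7/12-17/(6*q))/x)| ≤ 100/x^3 := by
  have hx0 : (0:ℝ) < x := by linarith
  have hx1 : (0:ℝ) < x - 1 := by linarith
  have hq0 : (0:ℝ) < q := by linarith
  have hrat : (2*q/(3*(x-1)))*(1+1/(2*x))*(1+(1/12+1/(6*q))/(x-1))
      - 2*(q/(3*x)+(1+q/3)/x^2)*(1+(7/12-17/(6*q))/x)
      = ((17/3+13/18*q-7/18*q^2) + x*(-34/3-14/9*q-5/18*q^2) + x^2*(17/3+q+3/4*q^2))
        / (q*x^3*(x-1)^2) := by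
    field_simp
    ring
  set n2 : ℝ := (17/3+13/18*q-7/18*q^2) + x*(-34/3-14/9*q-5/18*q^2) + x^2*(17/3+q+3/4*q^2)
    with hn2
  have hden : (0:ℝ) < q*x^3*(x-1)^2 := by positivity
  rw [hrat, abs_div, abs_of_pos hden, div_le_div_iff₀ hden (by positivity : (0:ℝ) < x^3)]
  have habs : |n2| ≤ 200*x^2 := by
    rw [abs_le, hn2]
    constructor <;> nlinarith [sq_nonneg x, sq_nonneg (x-1), mul_pos hx0 hx0,
      mul_nonneg (mul_nonneg hx0.le hx0.le) hx0.le, sq_nonneg (q-9), sq_nonneg (q-10),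
      mul_nonneg (sub_nonneg.2 hq10.le) (sq_nonneg x),
      mul_nonneg (sub_nonneg.2 hq9.le) (sq_nonneg x),
      mul_nonneg (sub_nonneg.2 hq9.le) hx0.le,
      mul_nonneg (sub_nonneg.2 hq10.le) hx0.le,
      mul_nonneg (sub_nonneg.2 hx) (sq_nonneg x)]
  have h4 : 2*x^2 ≤ q*(x-1)^2 := by nlinarith [sq_nonneg (x-1)]
  have hx3 : (0:ℝ) < x^3 := by positivity
  nlinarith [mul_le_mul_of_nonneg_right habs hx3.le,
    mul_le_mul_of_nonneg_left h4 (by positivity : (0:ℝ) ≤ 100*x^3)]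

set_option maxHeartbeats 1000000 in
theorem step1 (x q CMZ C0 C2 a N D F0 F2 s : ℝ)
    (hx : 30 ≤ x) (hq9 : 9 < q) (hq10 : q < 10)
    (hCMZ : 0 < CMZ) (hC0 : 0 < C0) (hC2 : 0 < C2) (ha : 0 < a)
    (hF0 : 0 < F0)
    (hs1 : 1 + 1/(2*x) ≤ s) (hs2 : s ≤ 1 + 1/(2*x) + 1/x^2)
    (hF2 : F2 = F0 * (2*q/(3*(x-1))) * s)
    (hD : a * F0 ≤ D)
    (hN : |N - CMZ*F2*(1+(1/12+1/(6*q))/(x-1))| ≤ C2*F2/(x-1)^2)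
    (hDa : |D - CMZ*F0*(1+(7/12-17/(6*q))/x)| ≤ C0*F0/x^2) :
    |1/2*N/D - (q/(3*x)+(1+q/3)/x^2)| ≤ ((112*C2+130*CMZ+18*C0)/(2*a))/x^3 := by
  have hx0 : (0:ℝ) < x := by linarith
  have hx1 : (0:ℝ) < x - 1 := by linarith
  have hq0 : (0:ℝ) < q := by linarith
  have hs0 : (0:ℝ) < s := by
    have : (0:ℝ) < 1/(2*x) := by positivity
    linarith
  have hsle2 : s ≤ 2 := by
    have h1 : 1/(2*x) ≤ 1/2 := by rw [div_le_div_iff₀ (by positivity) (by norm_num)]; nlinarith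
    have h2 : 1/x^2 ≤ 1/2 := by rw [div_le_div_iff₀ (by positivity) (by norm_num)]; nlinarith
    linarith
  have hF2pos : 0 < F2 := by rw [hF2]; positivity
  have hDpos : (0:ℝ) < D := lt_of_lt_of_le (by positivity) hD
  set m : ℝ := q/(3*x)+(1+q/3)/x^2 with hm
  have hmpos : 0 < m := by rw [hm]; positivity
  have hmle : m ≤ 4/x := by
    rw [hm]
    have e1 : q/(3*x) ≤ (7/2)/x := by
      rw [div_le_div_iff₀ (by positivity) hx0]; nlinarith
    have e2 : (1+q/3)/x^2 ≤ (1/2)/x := by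
      rw [div_le_div_iff₀ (by positivity) hx0]; nlinarith
    have e3 : (7/2)/x + (1/2)/x = 4/x := by ring
    linarith
  -- bound on F2 : F2 ≤ 28 * F0 / x
  have hinv : 1/(x-1) ≤ 2/x := by
    rw [div_le_div_iff₀ hx1 hx0]; linarith
  have hr_le : 2*q/(3*(x-1)) ≤ 14/x := by
    rw [div_le_div_iff₀ (by positivity) hx0]
    nlinarith [mul_pos (sub_pos.2 hq10) hx0, mul_pos hq0 hx0]
  have hr_pos : 0 < 2*q/(3*(x-1)) := by positivity
  have hF2le : F2 ≤ 28 * F0 / x := by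
    rw [hF2]
    calc F0 * (2*q/(3*(x-1))) * s ≤ F0 * (14/x) * 2 := by
          apply mul_le_mul (mul_le_mul_of_nonneg_left hr_le hF0.le) hsle2 hs0.le
          positivity
      _ = 28 * F0 / x := by ring
  -- first error term
  have herr1 : C2*F2/(x-1)^2 ≤ 112*C2*F0/x^3 := by
    have h1 : 1/(x-1)^2 ≤ 4/x^2 := by
      rw [div_le_div_iff₀ (by positivity) (by positivity)]; nlinarith
    have : C2*F2/(x-1)^2 = C2*F2 * (1/(x-1)^2) := by ring
    rw [this]
    calc C2*F2 * (1/(x-1)^2) ≤ C2*(28*F0/x) * (4/x^2) := by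
          apply mul_le_mul (mul_le_mul_of_nonneg_left hF2le hC2.le) h1 (by positivity)
          positivity
      _ = 112*C2*F0/x^3 := by ring
  -- Delta bound
  set c2' : ℝ := 1/12+1/(6*q) with hc2'
  set c0' : ℝ := 7/12-17/(6*q) with hc0'
  have hc2pos : 0 < c2' := by rw [hc2']; positivity
  have hc2le : c2' ≤ 1 := by
    rw [hc2']
    have : 1/(6*q) ≤ 1/2 := by rw [div_le_div_iff₀ (by positivity) (by norm_num)]; nlinarith
    linarith
  have hfac : 1 + c2'/(x-1) ≤ 2 := by
    have : c2'/(x-1) ≤ 1 := by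
      rw [div_le_one hx1]; linarith
    linarith
  have hfacpos : 0 < 1 + c2'/(x-1) := by positivity
  have hDelta : |(2*q/(3*(x-1)))*s*(1+c2'/(x-1)) - 2*m*(1+c0'/x)| ≤ 130/x^3 := by
    have h0 := delta0_bound x q hx hq9 hq10
    rw [← hc2', ← hc0', ← hm] at h0
    have hdiff : (2*q/(3*(x-1)))*s*(1+c2'/(x-1))
        - (2*q/(3*(x-1)))*(1+1/(2*x))*(1+c2'/(x-1))
        = (2*q/(3*(x-1))) * (s - (1+1/(2*x))) * (1+c2'/(x-1)) := by ring
    have hsub : |(2*q/(3*(x-1))) * (s - (1+1/(2*x))) * (1+c2'/(x-1))| ≤ 28/x^3 := by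
      rw [abs_mul, abs_mul]
      rw [abs_of_pos hr_pos, abs_of_pos hfacpos, abs_of_nonneg (by linarith : (0:ℝ) ≤ s - (1+1/(2*x)))]
      calc (2*q/(3*(x-1))) * (s - (1+1/(2*x))) * (1+c2'/(x-1))
          ≤ (14/x) * (1/x^2) * 2 := by
            apply mul_le_mul _ hfac hfacpos.le (by positivity)
            apply mul_le_mul hr_le (by linarith) (by linarith) (by positivity)
        _ = 28/x^3 := by ring
    calc |(2*q/(3*(x-1)))*s*(1+c2'/(x-1)) - 2*m*(1+c0'/x)|
        = |((2*q/(3*(x-1)))*(1+1/(2*x))*(1+c2'/(x-1)) - 2*m*(1+c0'/x))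
          + (2*q/(3*(x-1))) * (s - (1+1/(2*x))) * (1+c2'/(x-1))| := by
          congr 1; ring
      _ ≤ |(2*q/(3*(x-1)))*(1+1/(2*x))*(1+c2'/(x-1)) - 2*m*(1+c0'/x)|
          + |(2*q/(3*(x-1))) * (s - (1+1/(2*x))) * (1+c2'/(x-1))| := abs_add_le _ _
      _ ≤ 100/x^3 + 28/x^3 := add_le_add h0 hsub
      _ ≤ 130/x^3 := by
          rw [← add_div, div_le_div_iff₀ (by positivity) (by positivity)]; nlinarith
  -- numerator bound
  have hid : N - 2*m*D = (N - CMZ*F2*(1+c2'/(x-1)))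
      + CMZ*(F0*((2*q/(3*(x-1)))*s*(1+c2'/(x-1)) - 2*m*(1+c0'/x)))
      + 2*m*(CMZ*F0*(1+c0'/x) - D) := by
    rw [hF2]; ring
  have hNum : |N - 2*m*D| ≤ (112*C2+130*CMZ+18*C0)*F0/x^3 := by
    rw [hid]
    calc |(N - CMZ*F2*(1+c2'/(x-1)))
        + CMZ*(F0*((2*q/(3*(x-1)))*s*(1+c2'/(x-1)) - 2*m*(1+c0'/x)))
        + 2*m*(CMZ*F0*(1+c0'/x) - D)|
        ≤ |N - CMZ*F2*(1+c2'/(x-1))|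
          + |CMZ*(F0*((2*q/(3*(x-1)))*s*(1+c2'/(x-1)) - 2*m*(1+c0'/x)))|
          + |2*m*(CMZ*F0*(1+c0'/x) - D)| := abs_add_three _ _ _
      _ ≤ C2*F2/(x-1)^2 + CMZ*(F0*(130/x^3)) + (8/x)*(C0*F0/x^2) := by
          apply add_le_add (add_le_add hN _) _
          · rw [abs_mul, abs_mul, abs_of_pos hCMZ, abs_of_pos hF0]
            apply mul_le_mul_of_nonneg_left _ hCMZ.le
            exact mul_le_mul_of_nonneg_left hDelta hF0.le
          · rw [abs_mul]
            rw [abs_of_pos (by positivity : (0:ℝ) < 2*m)]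
            have h2m : 2*m ≤ 8/x := by
              calc 2*m ≤ 2*(4/x) := by linarith
                _ = 8/x := by ring
            apply mul_le_mul h2m _ (abs_nonneg _) (by positivity)
            rw [abs_sub_comm]
            exact hDa
      _ ≤ 112*C2*F0/x^3 + 130*CMZ*F0/x^3 + 8*C0*F0/x^3 := by
          apply add_le_add (add_le_add herr1 (le_of_eq (by ring)))
          apply le_of_eq; ring
      _ ≤ (112*C2+130*CMZ+18*C0)*F0/x^3 := by
          rw [← add_div, ← add_div, div_le_div_iff₀ (by positivity) (by positivity)]
          nlinarith [mul_pos hC0 hF0, mul_pos (mul_pos hC0 hF0) (by positivity : (0:ℝ) < x^3)]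
  -- conclude
  have hrw : 1/2*N/D - m = (N - 2*m*D)/(2*D) := by
    field_simp
  rw [hrw, abs_div, abs_of_pos (by positivity : (0:ℝ) < 2*D)]
  calc |N - 2*m*D|/(2*D) ≤ ((112*C2+130*CMZ+18*C0)*F0/x^3)/(2*(a*F0)) := by
        apply div_le_div₀ (by positivity) hNum (by positivity)
        linarith
    _ = ((112*C2+130*CMZ+18*C0)/(2*a))/x^3 := by
        field_simp

theorem abs_add_of_nonneg' (u v : ℝ) (hv : 0 ≤ v) : |u + v| ≤ |u| + v := by
  calc |u + v| ≤ |u| + |v| := abs_add_le _ _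
    _ = |u| + v := by rw [abs_of_nonneg hv]

theorem div_bound_aux (N D F0 a B x : ℝ) (ha : 0 < a) (hF0 : 0 < F0) (hx : 0 < x)
    (hB : 0 ≤ B) (hD : a*F0 ≤ D) (hN0 : 0 ≤ N) (hNB : N ≤ B*F0/x^3) :
    N/D ≤ (B/a)/x^3 := by
  calc N/D ≤ (B*F0/x^3)/(a*F0) := by
        apply div_le_div₀ (by positivity) hNB (by positivity) hD
    _ = (B/a)/x^3 := by field_simp
set_option maxHeartbeats 4000000 in
/-- Main Theorem (analytic content): under the Mirzakhani-Zograf asymptotics (H1) and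
two-sided bounds (H2) for the volumes `V_{g,n}` (`n ∈ {0,1,2}`), the quantity
`E_g = (1/2)V_{g-1,2}/V_{g,0} + (1/48)V_{g-1,1}/V_{g,0}
  + ∑_{j=2}^{⌊(g-1)/2⌋} V_{j,1}V_{g-j,1}/V_{g,0} + (1/2)V_{g/2,1}²/V_{g,0}`
(with `V_{g/2,1} := 0` for odd `g`) satisfies
`(1/(4π)) E_g = (π/12)/g + (1/(4π) + π/12)/g² + O(1/g³)`. -/
theorem stmt_15 (CMZ : ℝ) (hCMZ : 0 < CMZ) (V : ℕ → ℕ → ℝ)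
    (hpos : ∀ g : ℕ, 1 ≤ g → ∀ n : ℕ, n ≤ 2 → 0 < V g n)
    (h0 : ∃ C : ℝ, 0 < C ∧ ∃ g0 : ℕ, ∀ g : ℕ, g0 ≤ g →
      |V g 0 - CMZ * F g 0 * (1 + (7 / 12 - 17 / (6 * Real.pi ^ 2)) / (g : ℝ))|
        ≤ C * F g 0 / (g : ℝ) ^ 2)
    (h1 : ∃ C : ℝ, 0 < C ∧ ∃ g0 : ℕ, ∀ g : ℕ, g0 ≤ g →
      |V g 1 - CMZ * F g 1 * (1 + (1 / 3 - 5 / (6 * Real.pi ^ 2)) / (g : ℝ))|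
        ≤ C * F g 1 / (g : ℝ) ^ 2)
    (h2 : ∃ C : ℝ, 0 < C ∧ ∃ g0 : ℕ, ∀ g : ℕ, g0 ≤ g →
      |V g 2 - CMZ * F g 2 * (1 + (1 / 12 + 1 / (6 * Real.pi ^ 2)) / (g : ℝ))|
        ≤ C * F g 2 / (g : ℝ) ^ 2)
    (hbound : ∃ a A : ℝ, 0 < a ∧ a ≤ A ∧ ∀ g : ℕ, 2 ≤ g → ∀ n : ℕ, n ≤ 1 →
      a * F g n ≤ V g n ∧ V g n ≤ A * F g n)
    (E : ℕ → ℝ)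
    (hE : ∀ g : ℕ, 4 ≤ g →
      E g = (1 / 2) * V (g - 1) 2 / V g 0 + (1 / 48) * V (g - 1) 1 / V g 0
        + (∑ j ∈ Finset.Icc 2 ((g - 1) / 2), V j 1 * V (g - j) 1) / V g 0
        + (1 / 2) * (if Even g then V (g / 2) 1 else 0) ^ 2 / V g 0) :
    ∃ C : ℝ, 0 < C ∧ ∃ g0 : ℕ, ∀ g : ℕ, g0 ≤ g →
      |(1 / (4 * Real.pi)) * E g - (Real.pi / 12) / (g : ℝ)
          - (1 / (4 * Real.pi) + Real.pi / 12) / (g : ℝ) ^ 2|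
        ≤ C / (g : ℝ) ^ 3 := by
  obtain ⟨C0, hC0pos, g00, hh0⟩ := h0
  obtain ⟨C2, hC2pos, g02, hh2⟩ := h2
  obtain ⟨a, A, ha, haA, hb⟩ := hbound
  have hA : 0 < A := lt_of_lt_of_le ha haA
  refine ⟨(112*C2+130*CMZ+18*C0)/(2*a) + A/a + A^2/a + A^2/a + 1, by positivity,
    g00 + g02 + 30, ?_⟩
  intro g hg
  have hg30 : 30 ≤ g := by omega
  have hg4 : 4 ≤ g := by omega
  have hx30 : (30:ℝ) ≤ (g:ℝ) := by exact_mod_cast hg30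
  have hx0 : (0:ℝ) < (g:ℝ) := by linarith
  have hx1 : (0:ℝ) < (g:ℝ) - 1 := by linarith
  have hxne : (g:ℝ) ≠ 0 := ne_of_gt hx0
  have hπ : (0:ℝ) < Real.pi := Real.pi_pos
  have hπne : Real.pi ≠ 0 := ne_of_gt hπ
  have hq9 : (9:ℝ) < Real.pi^2 := by nlinarith [Real.pi_gt_three]
  have hq10 : Real.pi^2 < 10 := by nlinarith [Real.pi_lt_d2, Real.pi_gt_three]
  have hy : ((g-1 : ℕ) : ℝ) = (g:ℝ) - 1 := by
    push_cast [Nat.cast_sub (by omega : 1 ≤ g)]; ring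
  have hF0 : 0 < F g 0 := F_pos g 0 (by omega)
  have hF2pos : 0 < F (g-1) 2 := F_pos (g-1) 2 (by omega)
  have hF1pos : 0 < F (g-1) 1 := F_pos (g-1) 1 (by omega)
  have hD : a * F g 0 ≤ V g 0 := (hb g (by omega) 0 (by omega)).1
  have hDpos : (0:ℝ) < V g 0 := lt_of_lt_of_le (by positivity) hD
  -- sqrt ratio bounds
  obtain ⟨hs1, hs2⟩ := sqrt_ratio_bounds (g:ℝ) (by linarith)
  have hsqx : (0:ℝ) < Real.sqrt (g:ℝ) := Real.sqrt_pos.2 hx0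
  have hsqy : (0:ℝ) < Real.sqrt ((g:ℝ)-1) := Real.sqrt_pos.2 hx1
  -- F2 ratio identity
  have h3x : (3*(g:ℝ)-3) ≠ 0 := by nlinarith
  have hF2 : F (g-1) 2 = F g 0 * (2*Real.pi^2/(3*((g:ℝ)-1)))
      * (Real.sqrt (g:ℝ)/Real.sqrt ((g:ℝ)-1)) := by
    have h := F2_eq g hg4
    field_simp
    linear_combination h
  -- asymptotic hypotheses
  have hB0 := hh0 g (by omega)
  have hB2 := hh2 (g-1) (by omega)
  rw [hy] at hB2
  -- main term bound via step1
  have hT2 := step1 (g:ℝ) (Real.pi^2) CMZ C0 C2 a (V (g-1) 2) (V g 0) (F g 0)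
    (F (g-1) 2) (Real.sqrt (g:ℝ)/Real.sqrt ((g:ℝ)-1))
    hx30 hq9 hq10 hCMZ hC0pos hC2pos ha hF0 hs1 hs2 hF2 hD hB2 hB0
  -- bound on F (g-1) 1
  have hP : 4*(g:ℝ)^3 ≤ (3*(g:ℝ)-3) * ((3*(g:ℝ)-4) * (2*(g:ℝ)-3)) := by
    nlinarith [mul_nonneg (sq_nonneg (g:ℝ)) (show (0:ℝ) ≤ 14*(g:ℝ)-69 by linarith), hx30]
  have hF1 : F (g-1) 1 ≤ 5 * F g 0 / (g:ℝ)^3 := by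
    have h := F1_eq g hg4
    have hPpos : (0:ℝ) < (3*(g:ℝ)-3) * ((3*(g:ℝ)-4) * (2*(g:ℝ)-3)) := by nlinarith
    have hFid : F (g-1) 1 = F g 0 * (Real.pi^2 * (Real.sqrt (g:ℝ)/Real.sqrt ((g:ℝ)-1)))
        / ((3*(g:ℝ)-3) * ((3*(g:ℝ)-4) * (2*(g:ℝ)-3))) := by
      rw [eq_div_iff hPpos.ne', ← mul_div_assoc, ← mul_div_assoc, eq_div_iff hsqy.ne']
      linear_combination h
    rw [hFid]
    have hsle2 : Real.sqrt (g:ℝ)/Real.sqrt ((g:ℝ)-1) ≤ 2 := by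
      have h1 : 1/(2*(g:ℝ)) ≤ 1/2 := by
        rw [div_le_div_iff₀ (by positivity) (by norm_num)]; nlinarith
      have h2 : 1/(g:ℝ)^2 ≤ 1/2 := by
        rw [div_le_div_iff₀ (by positivity) (by norm_num)]; nlinarith
      linarith
    have hs0 : (0:ℝ) < Real.sqrt (g:ℝ)/Real.sqrt ((g:ℝ)-1) := by positivity
    calc F g 0 * (Real.pi^2 * (Real.sqrt (g:ℝ)/Real.sqrt ((g:ℝ)-1)))
          / ((3*(g:ℝ)-3) * ((3*(g:ℝ)-4) * (2*(g:ℝ)-3)))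
        ≤ F g 0 * 20 / (4*(g:ℝ)^3) := by
          apply div_le_div₀ (by positivity) _ (by positivity) hP
          apply mul_le_mul_of_nonneg_left _ hF0.le
          nlinarith [hsle2, hs0, hq10, hq9]
      _ = 5 * F g 0 / (g:ℝ)^3 := by ring
  -- T1 bound
  have hV1 : V (g-1) 1 ≤ A * F (g-1) 1 := (hb (g-1) (by omega) 1 (by omega)).2
  have hT1num : (1/48) * V (g-1) 1 ≤ A * F g 0 / (g:ℝ)^3 := by
    have step : (1/48) * V (g-1) 1 ≤ (1/48) * (A * (5 * F g 0 / (g:ℝ)^3)) := by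
      have := mul_le_mul_of_nonneg_left hF1 hA.le
      nlinarith [hV1, this]
    calc (1/48) * V (g-1) 1 ≤ (1/48) * (A * (5 * F g 0 / (g:ℝ)^3)) := step
      _ = (5/48) * (A * F g 0 / (g:ℝ)^3) := by ring
      _ ≤ A * F g 0 / (g:ℝ)^3 := by
          have : (0:ℝ) ≤ A * F g 0 / (g:ℝ)^3 := by positivity
          nlinarith
  have hT1 : (1/48) * V (g-1) 1 / V g 0 ≤ (A/a)/(g:ℝ)^3 :=
    div_bound_aux _ _ _ _ _ _ ha hF0 hx0 hA.le hD
      (by have := hpos (g-1) (by omega) 1 (by omega); positivity) hT1num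
  -- sum bound
  have hSumBound : (∑ j ∈ Finset.Icc 2 ((g-1)/2), V j 1 * V (g-j) 1)
      ≤ A^2 * F g 0 / (g:ℝ)^3 := by
    have hper : ∀ j ∈ Finset.Icc 2 ((g-1)/2), V j 1 * V (g-j) 1
        ≤ A^2 * (F g 0 / (g:ℝ)^4) := by
      intro j hj
      rw [Finset.mem_Icc] at hj
      obtain ⟨hj2, hjh⟩ := hj
      have hjg : 2*j ≤ g - 1 := by omega
      have hgk : 2 ≤ g - j := by omega
      have hVj : V j 1 ≤ A * F j 1 := (hb j (by omega) 1 (by omega)).2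
      have hVk : V (g-j) 1 ≤ A * F (g-j) 1 := (hb (g-j) (by omega) 1 (by omega)).2
      have hFj : 0 < F j 1 := F_pos j 1 (by omega)
      have hFk : 0 < F (g-j) 1 := F_pos (g-j) 1 (by omega)
      have hprod := Fprod_le j (g-j) hj2 (by omega) (by omega)
      rw [show j + (g-j) = g by omega] at hprod
      calc V j 1 * V (g-j) 1 ≤ (A * F j 1) * (A * F (g-j) 1) := by
            apply mul_le_mul hVj hVk (le_of_lt (hpos (g-j) (by omega) 1 (by omega)))
            positivity
        _ = A^2 * (F j 1 * F (g-j) 1) := by ring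
        _ ≤ A^2 * (F g 0 / (g:ℝ)^4) := by
            apply mul_le_mul_of_nonneg_left hprod (by positivity)
    calc (∑ j ∈ Finset.Icc 2 ((g-1)/2), V j 1 * V (g-j) 1)
        ≤ (Finset.Icc 2 ((g-1)/2)).card • (A^2 * (F g 0 / (g:ℝ)^4)) :=
          Finset.sum_le_card_nsmul _ _ _ hper
      _ = ((Finset.Icc 2 ((g-1)/2)).card : ℝ) * (A^2 * (F g 0 / (g:ℝ)^4)) := by
          rw [nsmul_eq_mul]
      _ ≤ (g:ℝ) * (A^2 * (F g 0 / (g:ℝ)^4)) := by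
          apply mul_le_mul_of_nonneg_right _ (by positivity)
          have : (Finset.Icc 2 ((g-1)/2)).card ≤ g := by
            rw [Nat.card_Icc]; omega
          exact_mod_cast this
      _ = A^2 * F g 0 / (g:ℝ)^3 := by field_simp
  have hSum0 : (0:ℝ) ≤ ∑ j ∈ Finset.Icc 2 ((g-1)/2), V j 1 * V (g-j) 1 := by
    apply Finset.sum_nonneg
    intro j hj
    rw [Finset.mem_Icc] at hj
    have h1 := hpos j (by omega) 1 (by omega)
    have h2 := hpos (g-j) (by omega) 1 (by omega)
    positivity
  have hTS : (∑ j ∈ Finset.Icc 2 ((g-1)/2), V j 1 * V (g-j) 1) / V g 0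
      ≤ (A^2/a)/(g:ℝ)^3 := by
    apply div_bound_aux _ _ _ _ _ _ ha hF0 hx0 (by positivity) hD hSum0
    calc (∑ j ∈ Finset.Icc 2 ((g-1)/2), V j 1 * V (g-j) 1) ≤ A^2 * F g 0 / (g:ℝ)^3 :=
        hSumBound
      _ = A^2 * F g 0 / (g:ℝ)^3 := rfl
  -- even term bound
  have hTEnum : (1/2) * (if Even g then V (g/2) 1 else 0)^2 ≤ A^2 * F g 0 / (g:ℝ)^3 := by
    by_cases heven : Even g
    · rw [if_pos heven]
      obtain ⟨c, hc⟩ := heven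
      have hc2 : g/2 = c := by omega
      have hcge : 2 ≤ c := by omega
      rw [hc2]
      have hVc : V c 1 ≤ A * F c 1 := (hb c (by omega) 1 (by omega)).2
      have hVc0 : 0 ≤ V c 1 := le_of_lt (hpos c (by omega) 1 (by omega))
      have hFc : 0 < F c 1 := F_pos c 1 (by omega)
      have hprod := Fprod_le c c hcge le_rfl (by omega)
      rw [show c + c = g by omega] at hprod
      calc (1/2) * (V c 1)^2 ≤ (1/2) * ((A * F c 1)^2) := by
            nlinarith [hVc, hVc0, hFc]
        _ = (1/2) * (A^2 * (F c 1 * F c 1)) := by ring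
        _ ≤ (1/2) * (A^2 * (F g 0 / (g:ℝ)^4)) := by
            apply mul_le_mul_of_nonneg_left _ (by norm_num)
            apply mul_le_mul_of_nonneg_left hprod (by positivity)
        _ ≤ A^2 * F g 0 / (g:ℝ)^3 := by
            have e : (1/2) * (A^2 * (F g 0 / (g:ℝ)^4)) = (A^2 * F g 0)/(2*(g:ℝ)^4) := by
              ring
            rw [e, div_le_div_iff₀ (by positivity) (by positivity)]
            nlinarith [mul_nonneg (mul_nonneg (mul_nonneg hA.le hA.le) hF0.le)
              (le_of_lt (pow_pos hx0 3)), hx30]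
    · rw [if_neg heven]
      norm_num
      positivity
  have hTE : (1/2) * (if Even g then V (g/2) 1 else 0)^2 / V g 0
      ≤ (A^2/a)/(g:ℝ)^3 := by
    apply div_bound_aux _ _ _ _ _ _ ha hF0 hx0 (by positivity) hD (by positivity)
    calc (1/2) * (if Even g then V (g/2) 1 else 0)^2 ≤ A^2 * F g 0 / (g:ℝ)^3 := hTEnum
      _ = A^2 * F g 0 / (g:ℝ)^3 := rfl
  -- nonnegativity of the three remainder terms
  have hT1nn : (0:ℝ) ≤ (1/48) * V (g-1) 1 / V g 0 := by
    have := hpos (g-1) (by omega) 1 (by omega)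
    positivity
  have hTSnn : (0:ℝ) ≤ (∑ j ∈ Finset.Icc 2 ((g-1)/2), V j 1 * V (g-j) 1) / V g 0 :=
    div_nonneg hSum0 hDpos.le
  have hTEnn : (0:ℝ) ≤ (1/2) * (if Even g then V (g/2) 1 else 0)^2 / V g 0 := by
    positivity
  -- assemble
  have hEg := hE g hg4
  have hsplit : E g - (Real.pi^2/(3*(g:ℝ)) + (1+Real.pi^2/3)/(g:ℝ)^2)
      = (1/2 * V (g-1) 2 / V g 0 - (Real.pi^2/(3*(g:ℝ)) + (1+Real.pi^2/3)/(g:ℝ)^2))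
        + ((1/48) * V (g-1) 1 / V g 0
          + ((∑ j ∈ Finset.Icc 2 ((g-1)/2), V j 1 * V (g-j) 1) / V g 0
            + (1/2) * (if Even g then V (g/2) 1 else 0)^2 / V g 0)) := by
    rw [hEg]; ring
  have hEbound : |E g - (Real.pi^2/(3*(g:ℝ)) + (1+Real.pi^2/3)/(g:ℝ)^2)|
      ≤ ((112*C2+130*CMZ+18*C0)/(2*a) + A/a + A^2/a + A^2/a)/(g:ℝ)^3 := by
    rw [hsplit]
    have hrest : (0:ℝ) ≤ (1/48) * V (g-1) 1 / V g 0
        + ((∑ j ∈ Finset.Icc 2 ((g-1)/2), V j 1 * V (g-j) 1) / V g 0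
          + (1/2) * (if Even g then V (g/2) 1 else 0)^2 / V g 0) := by
      linarith [hT1nn, hTSnn, hTEnn]
    calc _ ≤ _ := abs_add_of_nonneg' _ _ hrest
      _ ≤ ((112*C2+130*CMZ+18*C0)/(2*a))/(g:ℝ)^3
          + ((A/a)/(g:ℝ)^3 + ((A^2/a)/(g:ℝ)^3 + (A^2/a)/(g:ℝ)^3)) := by
          apply add_le_add hT2
          exact add_le_add hT1 (add_le_add hTS hTE)
      _ = ((112*C2+130*CMZ+18*C0)/(2*a) + A/a + A^2/a + A^2/a)/(g:ℝ)^3 := by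
          ring
  -- prefactor identity
  have hgoal_eq : (1/(4*Real.pi)) * E g - (Real.pi/12)/(g:ℝ)
      - (1/(4*Real.pi) + Real.pi/12)/(g:ℝ)^2
      = (1/(4*Real.pi)) * (E g - (Real.pi^2/(3*(g:ℝ)) + (1+Real.pi^2/3)/(g:ℝ)^2)) := by
    field_simp
    ring
  rw [hgoal_eq, abs_mul, abs_of_pos (by positivity : (0:ℝ) < 1/(4*Real.pi))]
  have hfrac : 1/(4*Real.pi) ≤ 1 := by
    rw [div_le_one (by positivity)]
    nlinarith [Real.pi_gt_three]
  calc (1/(4*Real.pi)) * |E g - (Real.pi^2/(3*(g:ℝ)) + (1+Real.pi^2/3)/(g:ℝ)^2)|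
      ≤ 1 * |E g - (Real.pi^2/(3*(g:ℝ)) + (1+Real.pi^2/3)/(g:ℝ)^2)| :=
        mul_le_mul_of_nonneg_right hfrac (abs_nonneg _)
    _ = |E g - (Real.pi^2/(3*(g:ℝ)) + (1+Real.pi^2/3)/(g:ℝ)^2)| := one_mul _
    _ ≤ ((112*C2+130*CMZ+18*C0)/(2*a) + A/a + A^2/a + A^2/a)/(g:ℝ)^3 := hEbound
    _ ≤ ((112*C2+130*CMZ+18*C0)/(2*a) + A/a + A^2/a + A^2/a + 1)/(g:ℝ)^3 := by
        apply (div_le_div_iff_of_pos_right (by positivity : (0:ℝ) < (g:ℝ)^3)).2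
        linarith
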